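/- arXiv:2509.09135 — 2 statements merged into one kernel-verified Lean document; each statement's English description precedes it below -/
import Mathlib

section
/- Let V : ℝⁿ → ℝ be C¹, f : ℝⁿ → ℝⁿ continuous, r : ℝⁿ → ℝ continuous, ρ > 0, and suppose x : [0,∞) → ℝⁿ solves ẋ = f(x) with the identity -ρV(y) + ∇V(y)·f(y) + r(y) = 0 holding for all y ∈ ℝⁿ. If additionally e^{-ρt}V(x(t)) → 0 as t → ∞, then V(x(0)) = ∫₀^∞ e^{-ρτ} r(x(τ)) dτ. -/
open scoped RealInnerProductSpace

theorem hjb_verification_equality (n : ℕ)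
    (V : EuclideanSpace ℝ (Fin n) → ℝ) (hV : ContDiff ℝ 1 V)
    (f : EuclideanSpace ℝ (Fin n) → EuclideanSpace ℝ (Fin n)) (hf : Continuous f)
    (r : EuclideanSpace ℝ (Fin n) → ℝ) (hr : Continuous r)
    (ρ : ℝ) (hρ : 0 < ρ)
    (x : ℝ → EuclideanSpace ℝ (Fin n)) (hx : ∀ t ≥ (0:ℝ), HasDerivAt x (f (x t)) t)
    (hHJB : ∀ y, -ρ * V y + ⟪gradient V y, f y⟫ + r y = 0)
    (htrans : Filter.Tendsto (fun t => Real.exp (-ρ * t) * V (x t))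
      Filter.atTop (nhds 0)) :
    Filter.Tendsto (fun T => ∫ τ in (0:ℝ)..T, Real.exp (-ρ * τ) * r (x τ))
      Filter.atTop (nhds (V (x 0))) := by
  have hDeriv : ∀ t ≥ (0:ℝ), HasDerivAt (fun s => -(Real.exp (-ρ * s) * V (x s)))
      (Real.exp (-ρ * t) * r (x t)) t := by
    intro t ht
    have hxd := hx t ht
    have hVd : DifferentiableAt ℝ V (x t) := (hV.differentiable one_ne_zero) (x t)
    have hgrad := hVd.hasGradientAt
    have hcomp : HasDerivAt (fun s => V (x s)) ⟪gradient V (x t), f (x t)⟫ t := by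
      have := hgrad.hasFDerivAt.comp_hasDerivAt t hxd
      simp at this ⊢
      exact this
    have hexp : HasDerivAt (fun s => Real.exp (-ρ * s)) (-ρ * Real.exp (-ρ * t)) t := by
      have h1 : HasDerivAt (fun s : ℝ => -ρ * s) (-ρ) t := by simpa using (hasDerivAt_id t).const_mul (-ρ)
      have h2 := (Real.hasDerivAt_exp (-ρ * t)).comp t h1
      simpa [Function.comp_def, mul_comm] using h2
    have hmul := hexp.mul hcomp
    have := hmul.neg
    refine this.congr_deriv ?_
    have h := hHJB (x t)
    have hr' : r (x t) = ρ * V (x t) - ⟪gradient V (x t), f (x t)⟫ := by linarith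
    rw [hr']
    ring
  have key : ∀ T ≥ (0:ℝ), (∫ τ in (0:ℝ)..T, Real.exp (-ρ * τ) * r (x τ))
      = Real.exp (-ρ * 0) * V (x 0) - Real.exp (-ρ * T) * V (x T) := by
    intro T hT
    have hIcc : Set.uIcc (0:ℝ) T = Set.Icc 0 T := Set.uIcc_of_le hT
    have hcont : ContinuousOn (fun τ => Real.exp (-ρ * τ) * r (x τ)) (Set.uIcc (0:ℝ) T) := by
      rw [hIcc]
      intro τ hτ
      have : ContinuousAt (fun τ => Real.exp (-ρ * τ) * r (x τ)) τ := by
        have hxc : ContinuousAt x τ := (hx τ hτ.1).continuousAt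
        exact ((Real.continuous_exp.comp (continuous_const.mul continuous_id)).continuousAt).mul
          (hr.continuousAt.comp hxc)
      exact this.continuousWithinAt
    have := intervalIntegral.integral_eq_sub_of_hasDerivAt
      (f := fun s => -(Real.exp (-ρ * s) * V (x s)))
      (fun t ht => hDeriv t (by rw [hIcc] at ht; exact ht.1))
      (hcont.intervalIntegrable)
    simp only [neg_mul] at this ⊢
    rw [this]
    simp
    ring
  have hlim : Filter.Tendsto
      (fun T => Real.exp (-ρ * 0) * V (x 0) - Real.exp (-ρ * T) * V (x T))
      Filter.atTop (nhds (V (x 0))) := by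
    have := (tendsto_const_nhds (x := Real.exp (-ρ * 0) * V (x 0))
      (f := Filter.atTop (α := ℝ))).sub htrans
    simpa using this
  refine hlim.congr' ?_
  filter_upwards [Filter.eventually_ge_atTop (0:ℝ)] with T hT
  exact (key T hT).symm
end

section
/- Let V : ℝⁿ → ℝ be C¹, let f : ℝⁿ × U → ℝⁿ and r : ℝⁿ × U → ℝ be continuous, and ρ > 0. Suppose -ρV(y) + sup_{u ∈ U}[∇V(y)·f(y,u) + r(y,u)] = 0 for all y, and that for any admissible control u(·) with trajectory x(·) solving ẋ = f(x,u), e^{-ρt}V(x(t)) → 0 as t → ∞. Then for any admissible control, V(x(0)) ≥ ∫₀^∞ e^{-ρτ} r(x(τ),u(τ)) dτ. -/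
set_option maxHeartbeats 1000000

open scoped RealInnerProductSpace
open MeasureTheory Set

lemma aux_intervalIntegrable {n m : ℕ}
    {x : ℝ → EuclideanSpace ℝ (Fin n)} {u : ℝ → EuclideanSpace ℝ (Fin m)}
    {U : Set (EuclideanSpace ℝ (Fin m))} (hU : IsCompact U)
    (hu_meas : Measurable u) (hu_mem : ∀ t ≥ (0:ℝ), u t ∈ U)
    (hxc : ContinuousOn x (Set.Ici 0))
    (ψ : EuclideanSpace ℝ (Fin n) × EuclideanSpace ℝ (Fin m) → ℝ) (hψ : Continuous ψ)
    {ρ : ℝ} (hρ : 0 ≤ ρ) (T : ℝ) (hT : 0 ≤ T) :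
    IntervalIntegrable (fun t => Real.exp (-ρ * t) * ψ (x t, u t)) volume 0 T := by
  rw [intervalIntegrable_iff_integrableOn_Ioc_of_le hT]
  set K := x '' (Set.Icc 0 T) with hK
  have hKc : IsCompact K := isCompact_Icc.image_of_continuousOn
    (hxc.mono (fun t ht => ht.1))
  obtain ⟨C, hC⟩ := (hKc.prod hU).exists_bound_of_continuousOn hψ.continuousOn
  have hxm : AEMeasurable x (volume.restrict (Set.Ioc 0 T)) :=
    (hxc.mono (fun t ht => le_of_lt ht.1)).aemeasurable measurableSet_Ioc
  have hpm : AEMeasurable (fun t => (x t, u t)) (volume.restrict (Set.Ioc 0 T)) :=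
    hxm.prodMk hu_meas.aemeasurable
  have hmeas : AEStronglyMeasurable (fun t => Real.exp (-ρ * t) * ψ (x t, u t))
      (volume.restrict (Set.Ioc 0 T)) := by
    exact ((Real.continuous_exp.comp (continuous_const.mul continuous_id)).aemeasurable.mul
      (hψ.measurable.comp_aemeasurable hpm)).aestronglyMeasurable
  refine Integrable.mono' (g := fun _ => C) (integrableOn_const measure_Ioc_lt_top.ne)
    hmeas ?_
  filter_upwards [ae_restrict_mem measurableSet_Ioc] with t ht
  have h1 : Real.exp (-ρ * t) ≤ 1 := by
    rw [show (1:ℝ) = Real.exp 0 by simp]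
    exact Real.exp_le_exp.mpr (by nlinarith [ht.1.le])
  have h2 : ‖ψ (x t, u t)‖ ≤ C := hC (x t, u t)
    ⟨mem_image_of_mem x ⟨ht.1.le, ht.2⟩, hu_mem t ht.1.le⟩
  calc ‖Real.exp (-ρ * t) * ψ (x t, u t)‖
      = Real.exp (-ρ * t) * ‖ψ (x t, u t)‖ := by
        rw [norm_mul, Real.norm_eq_abs, abs_of_pos (Real.exp_pos _)]
    _ ≤ 1 * C := mul_le_mul h1 h2 (norm_nonneg _) zero_le_one
    _ = C := one_mul C

theorem hjb_verification_inequality (n m : ℕ)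
    (U : Set (EuclideanSpace ℝ (Fin m))) (hU : IsCompact U) (hUne : U.Nonempty)
    (V : EuclideanSpace ℝ (Fin n) → ℝ) (hV : ContDiff ℝ 1 V)
    (f : EuclideanSpace ℝ (Fin n) → EuclideanSpace ℝ (Fin m) → EuclideanSpace ℝ (Fin n))
    (hf : Continuous fun p : EuclideanSpace ℝ (Fin n) × EuclideanSpace ℝ (Fin m) => f p.1 p.2)
    (r : EuclideanSpace ℝ (Fin n) → EuclideanSpace ℝ (Fin m) → ℝ)
    (hr : Continuous fun p : EuclideanSpace ℝ (Fin n) × EuclideanSpace ℝ (Fin m) => r p.1 p.2)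
    (ρ : ℝ) (hρ : 0 < ρ)
    (hHJB : ∀ y, -ρ * V y +
      sSup ((fun u => ⟪gradient V y, f y u⟫ + r y u) '' U) = 0)
    (u : ℝ → EuclideanSpace ℝ (Fin m)) (hu_meas : Measurable u)
    (hu_mem : ∀ t ≥ (0:ℝ), u t ∈ U)
    (x : ℝ → EuclideanSpace ℝ (Fin n)) (hx : ∀ t ≥ (0:ℝ), HasDerivAt x (f (x t) (u t)) t)
    (htrans : Filter.Tendsto (fun t => Real.exp (-ρ * t) * V (x t))
      Filter.atTop (nhds 0)) :
    ∀ L : ℝ, Filter.Tendsto (fun T => ∫ τ in (0:ℝ)..T, Real.exp (-ρ * τ) * r (x τ) (u τ))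
      Filter.atTop (nhds L) → L ≤ V (x 0) := by
  intro L hL
  have hVd : Differentiable ℝ V := hV.differentiable one_ne_zero
  have hxc : ContinuousOn x (Set.Ici 0) :=
    fun t ht => (hx t ht).continuousAt.continuousWithinAt
  set g : ℝ → ℝ := fun t => Real.exp (-ρ * t) * V (x t) with hg
  set g' : ℝ → ℝ := fun t =>
    Real.exp (-ρ * t) * (-ρ * V (x t) + ⟪gradient V (x t), f (x t) (u t)⟫) with hg'
  set P : ℝ → ℝ := fun t => Real.exp (-ρ * t) * r (x t) (u t) with hP
  -- derivative of g
  have hderiv : ∀ t ≥ (0:ℝ), HasDerivAt g (g' t) t := by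
    intro t ht
    have h1 : HasDerivAt (fun s : ℝ => Real.exp (-ρ * s)) (Real.exp (-ρ * t) * (-ρ)) t :=
      ((hasDerivAt_id t).const_mul (-ρ)).exp.congr_deriv (by simp)
    have hgrad : HasFDerivAt V (InnerProductSpace.toDual ℝ _ (gradient V (x t))) (x t) :=
      hasGradientAt_iff_hasFDerivAt.mp (hVd (x t)).hasGradientAt
    have h2 : HasDerivAt (fun s => V (x s)) ⟪gradient V (x t), f (x t) (u t)⟫ t := by
      exact (hgrad.comp_hasDerivAt t (hx t ht)).congr_deriv (by simp [InnerProductSpace.toDual_apply_apply])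
    have : HasDerivAt g (Real.exp (-ρ * t) * -ρ * V (x t) + Real.exp (-ρ * t) * ⟪gradient V (x t), f (x t) (u t)⟫) t := h1.mul h2
    convert this using 1
    simp only [hg']
    ring
  -- pointwise HJB inequality
  have hpt : ∀ t ≥ (0:ℝ), ⟪gradient V (x t), f (x t) (u t)⟫ + r (x t) (u t) ≤ ρ * V (x t) := by
    intro t ht
    set y := x t
    have hcont : Continuous fun w => ⟪gradient V y, f y w⟫ + r y w := by
      have hfy : Continuous fun w => f y w :=
        hf.comp (continuous_const.prodMk continuous_id)
      have hry : Continuous fun w => r y w :=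
        hr.comp (continuous_const.prodMk continuous_id)
      exact (continuous_const.inner hfy).add hry
    have hbdd : BddAbove ((fun w => ⟪gradient V y, f y w⟫ + r y w) '' U) :=
      (hU.image hcont).bddAbove
    have hle : ⟪gradient V y, f y (u t)⟫ + r y (u t) ≤
        sSup ((fun w => ⟪gradient V y, f y w⟫ + r y w) '' U) :=
      le_csSup hbdd (mem_image_of_mem _ (hu_mem t ht))
    have := hHJB y
    linarith
  -- pointwise derivative bound
  have hDle : ∀ t ≥ (0:ℝ), g' t ≤ -P t := by
    intro t ht
    have h := hpt t ht
    have he : (0:ℝ) < Real.exp (-ρ * t) := Real.exp_pos _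
    simp only [hg', hP]
    nlinarith [he, h]
  -- integrability
  have hPint : ∀ T : ℝ, 0 ≤ T → IntervalIntegrable P volume 0 T := by
    intro T hT
    exact aux_intervalIntegrable hU hu_meas hu_mem hxc
      (fun p => r p.1 p.2) hr hρ.le T hT
  have hg'int : ∀ T : ℝ, 0 ≤ T → IntervalIntegrable g' volume 0 T := by
    have hgradc : Continuous fun y : EuclideanSpace ℝ (Fin n) => gradient V y := by
      have h0 : Continuous fun y => fderiv ℝ V y := hV.continuous_fderiv one_ne_zero
      exact (InnerProductSpace.toDual ℝ _).symm.continuous.comp h0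
    have hψ : Continuous (fun p : EuclideanSpace ℝ (Fin n) × EuclideanSpace ℝ (Fin m) =>
        -ρ * V p.1 + ⟪gradient V p.1, f p.1 p.2⟫) :=
      (continuous_const.mul (hV.continuous.comp continuous_fst)).add
        ((hgradc.comp continuous_fst).inner hf)
    intro T hT
    exact aux_intervalIntegrable hU hu_meas hu_mem hxc _ hψ hρ.le T hT
  -- main bound for each T ≥ 0
  have hmain : ∀ T : ℝ, 0 ≤ T →
      (∫ τ in (0:ℝ)..T, P τ) ≤ V (x 0) - g T := by
    intro T hT
    have hftc : (∫ τ in (0:ℝ)..T, g' τ) = g T - g 0 := by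
      refine intervalIntegral.integral_eq_sub_of_hasDerivAt ?_ (hg'int T hT)
      intro t ht
      rw [Set.uIcc_of_le hT] at ht
      exact hderiv t ht.1
    have hmono : (∫ τ in (0:ℝ)..T, g' τ) ≤ ∫ τ in (0:ℝ)..T, -P τ := by
      refine intervalIntegral.integral_mono_on hT (hg'int T hT) ((hPint T hT).neg) ?_
      intro t ht
      exact hDle t ht.1
    have hneg : (∫ τ in (0:ℝ)..T, -P τ) = -∫ τ in (0:ℝ)..T, P τ :=
      intervalIntegral.integral_neg
    have hg0 : g 0 = V (x 0) := by simp [hg]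
    linarith [hmono, hftc, hneg, hg0]
  -- take limit
  have htend : Filter.Tendsto (fun T => V (x 0) - g T) Filter.atTop (nhds (V (x 0))) := by
    have := (tendsto_const_nhds (x := V (x 0)) (f := Filter.atTop)).sub htrans
    simpa using this
  have hev : ∀ᶠ T in Filter.atTop, (∫ τ in (0:ℝ)..T, P τ) ≤ V (x 0) - g T := by
    filter_upwards [Filter.eventually_ge_atTop (0:ℝ)] with T hT
    exact hmain T hT
  exact le_of_tendsto_of_tendsto hL htend hev
end
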